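/- Let c^2 > 1, kappa > 0, and mu > 0 sufficiently small. Then there exists a unique omega_mu > 0 such that c^2 mu omega_mu^2 = lambda_mu^+(omega_mu). Moreover, sqrt(kappa(1+mu))/(|c| sqrt(mu)) ≤ omega_mu ≤ sqrt(lambda_mu^+(pi))/(|c| sqrt(mu)). -/

import Mathlib

noncomputable def Pmu (κ μ t : ℝ) : ℝ :=
  (κ - 2*t + 2)^2 * μ^2 + 2*κ*(κ + 2*t - 2)*μ + κ^2

noncomputable def gfun (κ μ t : ℝ) : ℝ :=
  κ/2 + μ*(κ/2 + 1 - t) + Real.sqrt (Pmu κ μ t) / 2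

noncomputable def lamPlus (κ μ K : ℝ) : ℝ :=
  κ/2 + μ*(κ/2 + 1 - Real.cos K) + Real.sqrt (Pmu κ μ (Real.cos K)) / 2

lemma lam_eq (κ μ K : ℝ) : lamPlus κ μ K = gfun κ μ (Real.cos K) := rfl

-- sqrt lower bound: sqrt(Pmu t) ≥ κ + μ(κ+2t-2) for t ≤ 1, μ ≥ 0, κ > 0
lemma sqrtP_lb (κ μ t : ℝ) (ht : t ≤ 1) (hμ : 0 ≤ μ) (hκ : 0 < κ) :
    κ + μ*(κ + 2*t - 2) ≤ Real.sqrt (Pmu κ μ t) := by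
  have h : (κ + μ*(κ + 2*t - 2))^2 ≤ Pmu κ μ t := by
    unfold Pmu; nlinarith [sq_nonneg μ, mul_nonneg (mul_nonneg hκ.le (sq_nonneg μ)) (sub_nonneg.2 ht)]
  calc κ + μ*(κ + 2*t - 2) ≤ |κ + μ*(κ + 2*t - 2)| := le_abs_self _
    _ = Real.sqrt ((κ + μ*(κ + 2*t - 2))^2) := (Real.sqrt_sq_eq_abs _).symm
    _ ≤ Real.sqrt (Pmu κ μ t) := Real.sqrt_le_sqrt h

lemma g_lb (κ μ t : ℝ) (ht : t ≤ 1) (hμ : 0 ≤ μ) (hκ : 0 < κ) :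
    κ*(1+μ) ≤ gfun κ μ t := by
  have := sqrtP_lb κ μ t ht hμ hκ
  unfold gfun; linarith

lemma Pmu_nonneg (κ μ t : ℝ) (ht : t ≤ 1) (hμ : 0 ≤ μ) (hκ : 0 < κ) :
    0 ≤ Pmu κ μ t := by
  unfold Pmu
  nlinarith [sq_nonneg (κ + μ*(κ + 2*t - 2)), mul_nonneg (mul_nonneg hκ.le (sq_nonneg μ)) (sub_nonneg.2 ht)]

-- upper bound: g t ≤ g (-1) for t ∈ [-1,1]
lemma g_ub (κ μ t : ℝ) (ht1 : -1 ≤ t) (ht : t ≤ 1) (hμ : 0 ≤ μ) (hκ : 0 < κ) :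
    gfun κ μ t ≤ gfun κ μ (-1) := by
  have hS : κ + μ*(κ + 2*(-1:ℝ) - 2) ≤ Real.sqrt (Pmu κ μ (-1)) :=
    sqrtP_lb κ μ (-1) (by norm_num) hμ hκ
  have hSnn : 0 ≤ Real.sqrt (Pmu κ μ (-1)) := Real.sqrt_nonneg _
  have hS2 : (Real.sqrt (Pmu κ μ (-1)))^2 = Pmu κ μ (-1) :=
    Real.sq_sqrt (Pmu_nonneg κ μ (-1) (by norm_num) hμ hκ)
  set S := Real.sqrt (Pmu κ μ (-1)) with hSdef
  have hS2' : S^2 = (κ+4)^2*μ^2 + 2*κ*(κ-4)*μ + κ^2 := by rw [hS2]; unfold Pmu; ring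
  have hS' : κ + μ*(κ-4) ≤ S := by linarith [hS]
  have key : Real.sqrt (Pmu κ μ t) ≤ S + 2*μ*(1+t) := by
    have h1t : (0:ℝ) ≤ 1 + t := by linarith
    have hB : 0 ≤ S + 2*μ*(1+t) := by positivity
    calc Real.sqrt (Pmu κ μ t)
        ≤ Real.sqrt ((S + 2*μ*(1+t))^2) := by
          apply Real.sqrt_le_sqrt
          unfold Pmu
          nlinarith [mul_le_mul_of_nonneg_left hS' (mul_nonneg hμ h1t),
            mul_nonneg (mul_nonneg (mul_nonneg hμ hμ) h1t) hκ.le, sq_nonneg μ]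
      _ = S + 2*μ*(1+t) := Real.sqrt_sq hB
  unfold gfun; linarith

lemma sqrtP_half (κ μ t : ℝ) (ht1 : -1 ≤ t) (ht : t ≤ 1) (hμ0 : 0 ≤ μ)
    (hμκ : μ ≤ κ/8) (hκ : 0 < κ) : κ/2 ≤ Real.sqrt (Pmu κ μ t) := by
  have h := sqrtP_lb κ μ t ht hμ0 hκ
  nlinarith [h]

lemma g_lip (κ μ s t : ℝ) (hs1 : -1 ≤ s) (hs : s ≤ 1) (ht1 : -1 ≤ t) (ht : t ≤ 1)
    (hμ0 : 0 ≤ μ) (hμ1 : μ ≤ 1) (hμκ : μ ≤ κ/8) (hκ : 0 < κ) :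
    |gfun κ μ s - gfun κ μ t| ≤ μ * (5 + 8/κ) * |s - t| := by
  set a := Real.sqrt (Pmu κ μ s) with ha
  set b := Real.sqrt (Pmu κ μ t) with hb
  have ha2 : a^2 = Pmu κ μ s := Real.sq_sqrt (Pmu_nonneg κ μ s hs hμ0 hκ)
  have hb2 : b^2 = Pmu κ μ t := Real.sq_sqrt (Pmu_nonneg κ μ t ht hμ0 hκ)
  have hah : κ/2 ≤ a := sqrtP_half κ μ s hs1 hs hμ0 hμκ hκ
  have hbh : κ/2 ≤ b := sqrtP_half κ μ t ht1 ht hμ0 hμκ hκ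
  have habpos : 0 < a + b := by linarith
  have hab : a - b = (Pmu κ μ s - Pmu κ μ t)/(a+b) := by
    rw [eq_div_iff habpos.ne']; nlinarith [ha2, hb2]
  have hAB : |Pmu κ μ s - Pmu κ μ t| ≤ μ*(8*κ+16)*|s - t| := by
    have hE : Pmu κ μ s - Pmu κ μ t = (4*κ*μ - 4*μ^2*(κ+2-s-t)) * (s-t) := by
      unfold Pmu; ring
    rw [hE, abs_mul]
    apply mul_le_mul_of_nonneg_right _ (abs_nonneg _)
    rw [abs_le]
    have hkey : 0 ≤ μ * ((1-μ)*(κ+2-s-t)) :=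
      mul_nonneg hμ0 (mul_nonneg (by linarith) (by linarith))
    constructor <;> nlinarith [hkey, mul_nonneg hμ0 (by linarith : (0:ℝ) ≤ κ+2-s-t)]
  have h1 : |a - b| ≤ μ*(8*κ+16)*|s - t| / κ := by
    rw [hab, abs_div, abs_of_pos habpos]
    calc |Pmu κ μ s - Pmu κ μ t| / (a+b) ≤ |Pmu κ μ s - Pmu κ μ t| / κ :=
          div_le_div_of_nonneg_left (abs_nonneg _) hκ (by linarith)
      _ ≤ μ*(8*κ+16)*|s - t| / κ := by gcongr
  have hgd : gfun κ μ s - gfun κ μ t = -(μ*(s-t)) + (a-b)/2 := by unfold gfun; ring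
  rw [hgd]
  calc |-(μ*(s-t)) + (a-b)/2| ≤ |-(μ*(s-t))| + |(a-b)/2| := abs_add_le _ _
    _ = μ*|s-t| + |a-b|/2 := by
        rw [abs_neg, abs_mul, abs_of_nonneg hμ0, abs_div]
        norm_num
    _ ≤ μ*|s-t| + (μ*(8*κ+16)*|s - t|/κ)/2 := by linarith
    _ = μ*(5+8/κ)*|s-t| := by field_simp; ring

lemma lam_cont (c κ μ : ℝ) : Continuous (fun ω => c^2*μ*ω^2 - lamPlus κ μ ω) := by
  unfold lamPlus Pmu
  fun_prop


lemma uniq_sol (c κ μ : ℝ) (hc : 1 < c^2) (hκ : 0 < κ) (hμ : 0 < μ)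
    (hμ1 : μ ≤ 1) (hμκ : μ ≤ κ/8) (hμL : μ*(5+8/κ)^2 < 2*κ) :
    ∀ x y : ℝ, 0 < x → 0 < y →
      c^2*μ*x^2 = lamPlus κ μ x → c^2*μ*y^2 = lamPlus κ μ y → x = y := by
  have hL0 : (0:ℝ) < 5 + 8/κ := by
    have := div_pos (by norm_num : (0:ℝ) < 8) hκ; linarith
  have hc2 : (0:ℝ) < c^2 := by linarith
  have hlam_lb : ∀ K : ℝ, κ*(1+μ) ≤ lamPlus κ μ K := fun K => by
    rw [lam_eq]; exact g_lb κ μ (Real.cos K) (Real.cos_le_one K) hμ.le hκ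
  intro x y hx hy hex hey
  by_contra hne
  have hxy : 0 < |x - y| := abs_pos.mpr (sub_ne_zero.mpr hne)
  have hlbx : κ ≤ c^2*μ*x^2 := by have := hlam_lb x; nlinarith
  have hlby : κ ≤ c^2*μ*y^2 := by have := hlam_lb y; nlinarith
  have hlip := g_lip κ μ (Real.cos x) (Real.cos y) (Real.neg_one_le_cos x)
    (Real.cos_le_one x) (Real.neg_one_le_cos y) (Real.cos_le_one y) hμ.le hμ1 hμκ hκ
  have hcos : |Real.cos x - Real.cos y| ≤ |x - y| := by
    rw [Real.cos_sub_cos, abs_mul, abs_mul]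
    have hs1 : |Real.sin ((x+y)/2)| ≤ 1 :=
      abs_le.mpr ⟨Real.neg_one_le_sin _, Real.sin_le_one _⟩
    have hs2 : |Real.sin ((x-y)/2)| ≤ |(x-y)/2| := Real.abs_sin_le_abs
    calc |(-2:ℝ)| * |Real.sin ((x+y)/2)| * |Real.sin ((x-y)/2)|
        ≤ |(-2:ℝ)| * 1 * |(x-y)/2| := by
          apply mul_le_mul (mul_le_mul_of_nonneg_left hs1 (abs_nonneg _)) hs2
            (abs_nonneg _) (by positivity)
      _ = |x-y| := by rw [abs_div, abs_two, (by norm_num : |(-2:ℝ)| = 2)]; ring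
  have hdiff : c^2*μ*x^2 - c^2*μ*y^2 = gfun κ μ (Real.cos x) - gfun κ μ (Real.cos y) := by
    rw [← lam_eq, ← lam_eq]; linarith [hex, hey]
  have hmain : c^2*μ*((x+y)*|x-y|) ≤ μ*(5+8/κ)*|x-y| := by
    have h1 : |c^2*μ*x^2 - c^2*μ*y^2| ≤ μ*(5+8/κ)*|x-y| := by
      rw [hdiff]
      calc |gfun κ μ (Real.cos x) - gfun κ μ (Real.cos y)|
          ≤ μ*(5+8/κ)*|Real.cos x - Real.cos y| := hlip
        _ ≤ μ*(5+8/κ)*|x-y| := by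
            apply mul_le_mul_of_nonneg_left hcos (by positivity)
    have h2 : |c^2*μ*x^2 - c^2*μ*y^2| = c^2*μ*((x+y)*|x-y|) := by
      have : c^2*μ*x^2 - c^2*μ*y^2 = (c^2*μ*(x+y))*(x-y) := by ring
      rw [this, abs_mul,
        abs_of_pos (mul_pos (mul_pos hc2 hμ) (by linarith : (0:ℝ) < x+y))]
      ring
    linarith [h1, h2.symm.le, h2.le]
  have hsum : c^2*(x+y) ≤ 5+8/κ := by
    have h3 := (mul_le_mul_iff_left₀ hxy).mp
      (by linarith [hmain] : (c^2*μ*(x+y))*|x-y| ≤ (μ*(5+8/κ))*|x-y|)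
    exact le_of_mul_le_mul_left (by linarith [h3]) hμ
  have h4 : (c^2*(x+y))^2 ≤ (5+8/κ)^2 := by
    have hxy0 : (0:ℝ) ≤ c^2*(x+y) := by positivity
    nlinarith [hsum, hxy0]
  have h5 : μ*(c^2*(x+y))^2 ≤ μ*(5+8/κ)^2 := mul_le_mul_of_nonneg_left h4 hμ.le
  have e1 : c^2*κ ≤ c^2*(c^2*μ*x^2) := mul_le_mul_of_nonneg_left hlbx hc2.le
  have e2 : c^2*κ ≤ c^2*(c^2*μ*y^2) := mul_le_mul_of_nonneg_left hlby hc2.le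
  have e3 : κ ≤ c^2*κ := by nlinarith [hc, hκ]
  have e4 : (0:ℝ) ≤ μ*(c^2*c^2)*(2*x*y) := by positivity
  have hexp : μ*(c^2*(x+y))^2
      = c^2*(c^2*μ*x^2) + c^2*(c^2*μ*y^2) + μ*(c^2*c^2)*(2*x*y) := by ring
  have h6 : 2*κ ≤ μ*(c^2*(x+y))^2 := by linarith [e1, e2, e3, e4, hexp]
  linarith [h5, h6, hμL]

set_option maxHeartbeats 1000000 in
/-- For `c^2 > 1`, `κ > 0`, and sufficiently small `μ > 0`, there is a unique
`ω_μ > 0` with `c^2 μ ω_μ^2 = λ_μ^+(ω_μ)`, and moreover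
`sqrt (κ(1+μ)) / (|c| sqrt μ) ≤ ω_μ ≤ sqrt (λ_μ^+(π)) / (|c| sqrt μ)`. -/
theorem stmt5 (c κ : ℝ) (hc : 1 < c^2) (hκ : 0 < κ) :
    ∃ μ₀ > 0, ∀ μ : ℝ, 0 < μ → μ < μ₀ →
      ∃ ω : ℝ, (0 < ω ∧ c^2*μ*ω^2 = lamPlus κ μ ω ∧
          Real.sqrt (κ*(1+μ)) / (|c| * Real.sqrt μ) ≤ ω ∧
          ω ≤ Real.sqrt (lamPlus κ μ Real.pi) / (|c| * Real.sqrt μ)) ∧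
        (∀ ω' : ℝ, 0 < ω' → c^2*μ*ω'^2 = lamPlus κ μ ω' → ω' = ω) := by
  have hL0 : (0:ℝ) < 5 + 8/κ := by
    have := div_pos (by norm_num : (0:ℝ) < 8) hκ; linarith
  refine ⟨min (min 1 (κ/8)) (2*κ/(5+8/κ)^2), ?_, ?_⟩
  · have : (0:ℝ) < 2*κ/(5+8/κ)^2 := div_pos (by linarith) (by positivity)
    simp only [lt_min_iff]
    exact ⟨⟨by norm_num, by linarith⟩, this⟩
  intro μ hμ hμ0
  have hμ1 : μ ≤ 1 := le_of_lt (lt_of_lt_of_le hμ0 (le_trans (min_le_left _ _) (min_le_left _ _)))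
  have hμκ : μ ≤ κ/8 := le_of_lt (lt_of_lt_of_le hμ0 (le_trans (min_le_left _ _) (min_le_right _ _)))
  have hμL : μ*(5+8/κ)^2 < 2*κ := by
    have h := lt_of_lt_of_le hμ0 (min_le_right _ _)
    exact (lt_div_iff₀ (by positivity)).mp h
  have hc0 : c ≠ 0 := by intro h; rw [h] at hc; norm_num at hc
  have hc2 : (0:ℝ) < c^2 := by linarith
  have hsμ : 0 < Real.sqrt μ := Real.sqrt_pos.mpr hμ
  have hden : 0 < |c| * Real.sqrt μ := mul_pos (abs_pos.mpr hc0) hsμ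
  have hdsq : (|c| * Real.sqrt μ)^2 = c^2 * μ := by
    rw [mul_pow, sq_abs, Real.sq_sqrt hμ.le]
  have hκμ : (0:ℝ) < κ*(1+μ) := by nlinarith
  -- lower bound on lamPlus at any point
  have hlam_lb : ∀ K : ℝ, κ*(1+μ) ≤ lamPlus κ μ K := fun K => by
    rw [lam_eq]; exact g_lb κ μ (Real.cos K) (Real.cos_le_one K) hμ.le hκ
  -- upper bound
  have hlam_ub : ∀ K : ℝ, lamPlus κ μ K ≤ lamPlus κ μ Real.pi := fun K => by
    rw [lam_eq, lam_eq, Real.cos_pi]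
    exact g_ub κ μ (Real.cos K) (Real.neg_one_le_cos K) (Real.cos_le_one K) hμ.le hκ
  have hlamπ : κ*(1+μ) ≤ lamPlus κ μ Real.pi := hlam_lb _
  set ωlo := Real.sqrt (κ*(1+μ)) / (|c| * Real.sqrt μ) with hωlo_def
  set ωhi := Real.sqrt (lamPlus κ μ Real.pi) / (|c| * Real.sqrt μ) with hωhi_def
  have hωlo_pos : 0 < ωlo := div_pos (Real.sqrt_pos.mpr hκμ) hden
  have hωlo_le : ωlo ≤ ωhi :=
    (div_le_div_iff_of_pos_right hden).mpr (Real.sqrt_le_sqrt hlamπ)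
  have hlo2 : c^2*μ*ωlo^2 = κ*(1+μ) := by
    rw [hωlo_def, div_pow, hdsq, Real.sq_sqrt hκμ.le]
    field_simp
  have hhi2 : c^2*μ*ωhi^2 = lamPlus κ μ Real.pi := by
    rw [hωhi_def, div_pow, hdsq, Real.sq_sqrt (le_trans hκμ.le hlamπ)]
    field_simp
  -- IVT
  set F := fun ω => c^2*μ*ω^2 - lamPlus κ μ ω with hF
  have hFlo : F ωlo ≤ 0 := by simp only [hF]; have := hlam_lb ωlo; linarith [hlo2]
  have hFhi : 0 ≤ F ωhi := by simp only [hF]; have := hlam_ub ωhi; linarith [hhi2]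
  have hivt := intermediate_value_Icc hωlo_le (lam_cont c κ μ).continuousOn
  obtain ⟨ω, hωmem, hFω⟩ := hivt ⟨hFlo, hFhi⟩
  have hωeq : c^2*μ*ω^2 = lamPlus κ μ ω := by
    have : F ω = 0 := hFω
    simp only [hF] at this; linarith
  have hωpos : 0 < ω := lt_of_lt_of_le hωlo_pos hωmem.1
  exact ⟨ω, ⟨hωpos, hωeq, hωmem.1, hωmem.2⟩,
    fun ω' hω' heq => uniq_sol c κ μ hc hκ hμ hμ1 hμκ hμL ω' ω hω' hωpos heq hωeq⟩
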